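/- Let n ≥ 1, let 𝒦 ⊆ ℝⁿ be a convex set containing the closed Euclidean ball of radius r > 0 centered at the origin, let C > 0 and let f : 𝒦 → ℝ be convex on 𝒦 with 0 ≤ f(x) ≤ C for all x ∈ 𝒦. Let 0 < ε < 1 and set 𝒦_ε = (1−ε)·𝒦 = {(1−ε)z : z ∈ 𝒦}. Then inf_{x ∈ 𝒦_ε} f(x) ≤ inf_{x ∈ 𝒦} f(x) + C·ε. -/
import Mathlib


open scoped Pointwise

/-- Part (ii) of the effective-Lipschitz lemma of Flaxman, Kalai and McMahan:
shrinking the convex body by a factor `(1−ε)` increases the minimum of a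
`[0,C]`-valued convex function by at most `Cε`. -/
theorem shrunk_body_min
    (n : ℕ) (hn : 1 ≤ n) (𝒦 : Set (EuclideanSpace ℝ (Fin n)))
    (hconv : Convex ℝ 𝒦) (r : ℝ) (hr : 0 < r)
    (hball : Metric.closedBall (0 : EuclideanSpace ℝ (Fin n)) r ⊆ 𝒦)
    (C : ℝ) (hC : 0 < C)
    (f : EuclideanSpace ℝ (Fin n) → ℝ) (hf : ConvexOn ℝ 𝒦 f)
    (hf0 : ∀ x ∈ 𝒦, 0 ≤ f x) (hfC : ∀ x ∈ 𝒦, f x ≤ C)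
    (ε : ℝ) (hε0 : 0 < ε) (hε1 : ε < 1)
    (𝒦ε : Set (EuclideanSpace ℝ (Fin n))) (h𝒦ε : 𝒦ε = (1 - ε) • 𝒦) :
    sInf (f '' 𝒦ε) ≤ sInf (f '' 𝒦) + C * ε := by
  have h0 : (0 : EuclideanSpace ℝ (Fin n)) ∈ 𝒦 := hball (by simp [hr.le])
  have hsub : 𝒦ε ⊆ 𝒦 := by
    rw [h𝒦ε]
    rintro _ ⟨z, hz, rfl⟩
    have := hconv hz h0 (by linarith : (0:ℝ) ≤ 1 - ε) hε0.le (by ring)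
    simpa using this
  have hbdd : BddBelow (f '' 𝒦ε) := by
    refine ⟨0, ?_⟩
    rintro _ ⟨x, hx, rfl⟩
    exact hf0 x (hsub hx)
  have key : ∀ x ∈ 𝒦, sInf (f '' 𝒦ε) ≤ f x + C * ε := by
    intro x hx
    have hmem : (1 - ε) • x ∈ 𝒦ε := by
      rw [h𝒦ε]; exact Set.smul_mem_smul_set hx
    have h1 : sInf (f '' 𝒦ε) ≤ f ((1 - ε) • x) :=
      csInf_le hbdd ⟨_, hmem, rfl⟩
    have h2 := hf.2 hx h0 (by linarith : (0:ℝ) ≤ 1 - ε) hε0.le (by ring)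
    have h3 : f ((1 - ε) • x) ≤ (1 - ε) * f x + ε * f 0 := by
      simpa using h2
    have h4 : f 0 ≤ C := hfC 0 h0
    have h5 : 0 ≤ f x := hf0 x hx
    nlinarith
  have hne : (f '' 𝒦).Nonempty := ⟨f 0, 0, h0, rfl⟩
  have : sInf (f '' 𝒦ε) - C * ε ≤ sInf (f '' 𝒦) := by
    apply le_csInf hne
    rintro _ ⟨x, hx, rfl⟩
    linarith [key x hx]
  linarith
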